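/- Let P_1, P_2 be CPTs from finite set X to finite set Y, and π_1, π_2 probability mass functions on X with induced marginals ρ_j(y) = Σ_x π_j(x) (P_j)_x(y). Then d_V(ρ_1, ρ_2) ≤ d_V⁺(P_1,P_2) + d_V(π_1, π_2) · d_V*(P_1, P_2). -/

import Mathlib

noncomputable def dV {Z : Type*} [Fintype Z] (p q : Z → ℝ) : ℝ :=
  (1/2) * ∑ z, |p z - q z|

def IsPMF {Z : Type*} [Fintype Z] (p : Z → ℝ) : Prop :=
  (∀ z, 0 ≤ p z) ∧ ∑ z, p z = 1

noncomputable def dVplus {X Y : Type*} [Fintype X] [Fintype Y]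
    (P Q : X → Y → ℝ) : ℝ :=
  ⨆ x : X, dV (P x) (Q x)

noncomputable def dVstar {X Y : Type*} [Fintype X] [Fintype Y]
    (P Q : X → Y → ℝ) : ℝ :=
  ⨆ x : X, ⨆ x' : X, dV (P x) (Q x')

lemma dV_nonneg {Z : Type*} [Fintype Z] (p q : Z → ℝ) : 0 ≤ dV p q := by
  unfold dV; positivity

lemma le_dVplus {X Y : Type*} [Fintype X] [Fintype Y] (P Q : X → Y → ℝ) (x : X) :
    dV (P x) (Q x) ≤ dVplus P Q := by
  unfold dVplus
  exact le_ciSup (f := fun x => dV (P x) (Q x)) (Set.Finite.bddAbove (Set.finite_range _)) x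

lemma le_dVstar {X Y : Type*} [Fintype X] [Fintype Y] (P Q : X → Y → ℝ) (x x' : X) :
    dV (P x) (Q x') ≤ dVstar P Q := by
  unfold dVstar
  have h1 : dV (P x) (Q x') ≤ ⨆ x' : X, dV (P x) (Q x') :=
    le_ciSup (f := fun x' => dV (P x) (Q x')) (Set.Finite.bddAbove (Set.finite_range _)) x'
  exact h1.trans (le_ciSup (f := fun x => ⨆ x' : X, dV (P x) (Q x'))
    (Set.Finite.bddAbove (Set.finite_range _)) x)

lemma dVplus_nonneg {X Y : Type*} [Fintype X] [Fintype Y] [Nonempty X]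
    (P Q : X → Y → ℝ) : 0 ≤ dVplus P Q := by
  obtain ⟨x⟩ := ‹Nonempty X›
  exact (dV_nonneg (P x) (Q x)).trans (le_dVplus P Q x)

lemma dVstar_nonneg {X Y : Type*} [Fintype X] [Fintype Y] [Nonempty X]
    (P Q : X → Y → ℝ) : 0 ≤ dVstar P Q := by
  obtain ⟨x⟩ := ‹Nonempty X›
  exact (dV_nonneg (P x) (Q x)).trans (le_dVstar P Q x x)

theorem stmt6 {X Y : Type*} [Fintype X] [Fintype Y] [Nonempty X]
    (P1 P2 : X → Y → ℝ) (hP1 : ∀ x, IsPMF (P1 x)) (hP2 : ∀ x, IsPMF (P2 x))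
    (π1 π2 : X → ℝ) (hπ1 : IsPMF π1) (hπ2 : IsPMF π2) :
    dV (fun y => ∑ x, π1 x * P1 x y) (fun y => ∑ x, π2 x * P2 x y) ≤
      dVplus P1 P2 + dV π1 π2 * dVstar P1 P2 := by
  classical
  obtain ⟨h1n, h1s⟩ := hπ1
  obtain ⟨h2n, h2s⟩ := hπ2
  set m : X → ℝ := fun x => min (π1 x) (π2 x) with hm
  set a : X → ℝ := fun x => π1 x - m x with haa
  set b : X → ℝ := fun x => π2 x - m x with hbb
  have ha0 : ∀ x, 0 ≤ a x := fun x => sub_nonneg.2 (min_le_left _ _)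
  have hb0 : ∀ x, 0 ≤ b x := fun x => sub_nonneg.2 (min_le_right _ _)
  have hm0 : ∀ x, 0 ≤ m x := fun x => le_min (h1n x) (h2n x)
  have hab : ∀ x, a x + b x = |π1 x - π2 x| := by
    intro x
    rcases le_total (π1 x) (π2 x) with h | h
    · simp only [haa, hbb, hm, min_eq_left h, abs_of_nonpos (sub_nonpos.2 h)]; ring
    · simp only [haa, hbb, hm, min_eq_right h, abs_of_nonneg (sub_nonneg.2 h)]; ring
  have hsab : ∑ x, a x = ∑ x, b x := by
    have h : ∑ x, (a x - b x) = 0 := by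
      have : ∀ x, a x - b x = π1 x - π2 x := fun x => by simp only [haa, hbb]; ring
      simp only [this, Finset.sum_sub_distrib, h1s, h2s, sub_self]
    rw [Finset.sum_sub_distrib] at h
    linarith
  set d := dV π1 π2 with hdd
  have hda : d = ∑ x, a x := by
    have h : ∑ x, |π1 x - π2 x| = ∑ x, (a x + b x) :=
      Finset.sum_congr rfl fun x _ => (hab x).symm
    rw [hdd]; unfold dV
    rw [h, Finset.sum_add_distrib, ← hsab]; ring
  have hdb : d = ∑ x, b x := hda.trans hsab
  have hd0 : 0 ≤ d := hda ▸ Finset.sum_nonneg fun x _ => ha0 x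
  -- decomposition
  have key : dV (fun y => ∑ x, π1 x * P1 x y) (fun y => ∑ x, π2 x * P2 x y)
      ≤ (1/2) * ∑ y, |∑ x, m x * (P1 x y - P2 x y)|
        + (1/2) * ∑ y, |(∑ x, a x * P1 x y) - (∑ x, b x * P2 x y)| := by
    unfold dV
    rw [← mul_add, ← Finset.sum_add_distrib]
    apply mul_le_mul_of_nonneg_left _ (by norm_num)
    apply Finset.sum_le_sum
    intro y _
    have hdecomp : (∑ x, π1 x * P1 x y) - ∑ x, π2 x * P2 x y
        = (∑ x, m x * (P1 x y - P2 x y))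
          + ((∑ x, a x * P1 x y) - (∑ x, b x * P2 x y)) := by
      rw [← Finset.sum_sub_distrib, ← Finset.sum_sub_distrib, ← Finset.sum_add_distrib]
      apply Finset.sum_congr rfl
      intro x _
      simp only [haa, hbb]; ring
    calc |(∑ x, π1 x * P1 x y) - ∑ x, π2 x * P2 x y|
        = |(∑ x, m x * (P1 x y - P2 x y))
          + ((∑ x, a x * P1 x y) - (∑ x, b x * P2 x y))| := by rw [hdecomp]
      _ ≤ _ := abs_add_le _ _
  -- first term bound
  have hT1 : (1/2) * ∑ y, |∑ x, m x * (P1 x y - P2 x y)| ≤ dVplus P1 P2 := by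
    have hmsum : ∑ x, m x ≤ 1 := by
      rw [← h1s]
      exact Finset.sum_le_sum fun x _ => min_le_left _ _
    calc (1/2) * ∑ y, |∑ x, m x * (P1 x y - P2 x y)|
        ≤ (1/2) * ∑ y, ∑ x, m x * |P1 x y - P2 x y| := by
          apply mul_le_mul_of_nonneg_left _ (by norm_num)
          apply Finset.sum_le_sum
          intro y _
          refine (Finset.abs_sum_le_sum_abs _ _).trans (le_of_eq ?_)
          exact Finset.sum_congr rfl fun x _ => by rw [abs_mul, abs_of_nonneg (hm0 x)]
      _ = ∑ x, m x * dV (P1 x) (P2 x) := by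
          rw [Finset.sum_comm, Finset.mul_sum]
          refine Finset.sum_congr rfl fun x _ => ?_
          unfold dV
          rw [← Finset.mul_sum]; ring
      _ ≤ ∑ x, m x * dVplus P1 P2 :=
          Finset.sum_le_sum fun x _ =>
            mul_le_mul_of_nonneg_left (le_dVplus P1 P2 x) (hm0 x)
      _ = (∑ x, m x) * dVplus P1 P2 := (Finset.sum_mul _ _ _).symm
      _ ≤ 1 * dVplus P1 P2 :=
          mul_le_mul_of_nonneg_right hmsum (dVplus_nonneg P1 P2)
      _ = dVplus P1 P2 := one_mul _
  -- second term bound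
  have hT2 : (1/2) * ∑ y, |(∑ x, a x * P1 x y) - (∑ x, b x * P2 x y)|
      ≤ d * dVstar P1 P2 := by
    rcases eq_or_lt_of_le hd0 with hd | hd
    · -- d = 0 : a = b = 0
      have haz : ∀ x ∈ Finset.univ, a x = 0 :=
        (Finset.sum_eq_zero_iff_of_nonneg fun x _ => ha0 x).1 (by rw [← hda, ← hd])
      have hbz : ∀ x ∈ Finset.univ, b x = 0 :=
        (Finset.sum_eq_zero_iff_of_nonneg fun x _ => hb0 x).1 (by rw [← hdb, ← hd])
      have : ∀ y, (∑ x, a x * P1 x y) - (∑ x, b x * P2 x y) = 0 := by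
        intro y
        rw [Finset.sum_eq_zero fun x hx => by rw [haz x hx, zero_mul],
          Finset.sum_eq_zero fun x hx => by rw [hbz x hx, zero_mul], sub_zero]
      simp only [this, abs_zero, Finset.sum_const_zero, mul_zero, ← hd, zero_mul, le_refl]
    · -- d > 0
      rw [← mul_le_mul_iff_right₀ hd]
      have hid : ∀ y, d * ((∑ x, a x * P1 x y) - ∑ x, b x * P2 x y)
          = ∑ x, ∑ x', a x * b x' * (P1 x y - P2 x' y) := by
        intro y
        have h1 : d * ∑ x, a x * P1 x y = ∑ x, ∑ x', a x * b x' * P1 x y := by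
          rw [hdb, Finset.sum_mul_sum, Finset.sum_comm]
          refine Finset.sum_congr rfl fun x _ => Finset.sum_congr rfl fun x' _ => by ring
        have h2 : d * ∑ x, b x * P2 x y = ∑ x, ∑ x', a x * b x' * P2 x' y := by
          rw [hda, Finset.sum_mul_sum]
          refine Finset.sum_congr rfl fun x _ => Finset.sum_congr rfl fun x' _ => by ring
        rw [mul_sub, h1, h2, ← Finset.sum_sub_distrib]
        refine Finset.sum_congr rfl fun x _ => ?_
        rw [← Finset.sum_sub_distrib]
        exact Finset.sum_congr rfl fun x' _ => by ring
      calc d * ((1/2) * ∑ y, |(∑ x, a x * P1 x y) - (∑ x, b x * P2 x y)|)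
          = (1/2) * ∑ y, |d * ((∑ x, a x * P1 x y) - ∑ x, b x * P2 x y)| := by
            simp only [abs_mul, abs_of_nonneg hd0, Finset.mul_sum]
            exact Finset.sum_congr rfl fun y _ => by ring
        _ = (1/2) * ∑ y, |∑ x, ∑ x', a x * b x' * (P1 x y - P2 x' y)| := by
            simp only [hid]
        _ ≤ (1/2) * ∑ y, ∑ x, ∑ x', a x * b x' * |P1 x y - P2 x' y| := by
            apply mul_le_mul_of_nonneg_left _ (by norm_num)
            apply Finset.sum_le_sum
            intro y _
            refine (Finset.abs_sum_le_sum_abs _ _).trans ?_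
            apply Finset.sum_le_sum
            intro x _
            refine (Finset.abs_sum_le_sum_abs _ _).trans (le_of_eq ?_)
            exact Finset.sum_congr rfl fun x' _ => by
              rw [abs_mul, abs_of_nonneg (mul_nonneg (ha0 x) (hb0 x'))]
        _ = ∑ x, ∑ x', a x * b x' * dV (P1 x) (P2 x') := by
            rw [Finset.sum_comm, Finset.mul_sum]
            refine Finset.sum_congr rfl fun x _ => ?_
            rw [Finset.sum_comm, Finset.mul_sum]
            refine Finset.sum_congr rfl fun x' _ => ?_
            unfold dV
            rw [← Finset.mul_sum]; ring
        _ ≤ ∑ x, ∑ x', a x * b x' * dVstar P1 P2 :=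
            Finset.sum_le_sum fun x _ => Finset.sum_le_sum fun x' _ =>
              mul_le_mul_of_nonneg_left (le_dVstar P1 P2 x x')
                (mul_nonneg (ha0 x) (hb0 x'))
        _ = d * (d * dVstar P1 P2) := by
            have h : ∑ x, ∑ x', a x * b x' * dVstar P1 P2
                = (∑ x, a x) * (∑ x', b x') * dVstar P1 P2 := by
              rw [Finset.sum_mul_sum, Finset.sum_mul]
              refine Finset.sum_congr rfl fun x _ => ?_
              rw [Finset.sum_mul]
            rw [h, ← hda, ← hdb]; ring
  linarith [key, hT1, hT2]
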